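/- Let Γ be a linearly ordered abelian group, κ an ordinal, {γ_ρ}_{ρ<κ} a strictly increasing sequence in Γ, and for i in a finite index set I let λ_i ∈ Γ. Then there exists i_0 ∈ I and an index λ < κ such that for all ρ > λ and all i ∈ I with i ≠ i_0: λ_i + i·γ_ρ > λ_{i_0} + i_0·γ_ρ, where i·γ denotes the i-fold sum. -/

import Mathlib

/-- Kaplansky's Lemma 4: given a strictly increasing sequence `γ` in a linearly
ordered abelian group and finitely many affine functions `ρ ↦ λ i + i • γ ρ`
with distinct integer slopes `i ∈ I`, eventually exactly one of them is
strictly minimal. -/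
theorem eventually_unique_minimal_affine
    (Γ : Type) [AddCommGroup Γ] [LinearOrder Γ] [IsOrderedAddMonoid Γ]
    {ι : Type} [LinearOrder ι] [Nonempty ι]
    (γ : ι → Γ) (hγ : StrictMono γ)
    (I : Finset ℕ) (hI : I.Nonempty) (lam : ℕ → Γ) :
    ∃ i₀ ∈ I, ∃ ρ₀ : ι, ∀ ρ, ρ₀ < ρ → ∀ i ∈ I, i ≠ i₀ →
      lam i₀ + i₀ • γ ρ < lam i + i • γ ρ := by
  classical
  let f : ℕ → ι → Γ := fun i ρ => lam i + i • γ ρ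
  -- if `f i ≤ f j` once and `i < j`, then `f i < f j` strictly afterwards
  have main : ∀ i j : ℕ, i < j → ∀ ρ₁ ρ : ι, ρ₁ < ρ → f i ρ₁ ≤ f j ρ₁ →
      f i ρ < f j ρ := by
    intro i j hij ρ₁ ρ hlt hle
    have hd : 0 < j - i := Nat.sub_pos_of_lt hij
    have h1 : (j - i) • γ ρ₁ < (j - i) • γ ρ := nsmul_lt_nsmul_right hd.ne' (hγ hlt)
    have e : ∀ x : Γ, j • x = (j - i) • x + i • x := by
      intro x; rw [← add_nsmul]; congr 1; omega
    have hle' : lam i ≤ lam j + (j - i) • γ ρ₁ := by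
      have := hle
      simp only [f, e] at this
      rw [← add_assoc] at this
      exact le_of_add_le_add_right this
    have hlt' : lam i < lam j + (j - i) • γ ρ := hle'.trans_lt (add_lt_add_right h1 _)
    simp only [f, e]
    rw [← add_assoc]
    exact add_lt_add_left hlt' _
  -- pairwise eventual comparison
  have pair : ∀ i j : ℕ, i < j → ∃ ρ₁ : ι,
      (∀ ρ, ρ₁ < ρ → f i ρ < f j ρ) ∨ (∀ ρ, ρ₁ < ρ → f j ρ < f i ρ) := by
    intro i j hij
    by_cases h : ∃ ρ, f i ρ ≤ f j ρ
    · obtain ⟨ρ₁, hρ₁⟩ := h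
      exact ⟨ρ₁, Or.inl fun ρ hρ => main i j hij ρ₁ ρ hρ hρ₁⟩
    · push_neg at h
      exact ⟨Classical.arbitrary ι, Or.inr fun ρ _ => h ρ⟩
  have pair' : ∀ i j : ℕ, i ≠ j → ∃ ρ₁ : ι,
      (∀ ρ, ρ₁ < ρ → f i ρ < f j ρ) ∨ (∀ ρ, ρ₁ < ρ → f j ρ < f i ρ) := by
    intro i j hij
    rcases lt_or_gt_of_ne hij with h | h
    · exact pair i j h
    · obtain ⟨ρ₁, hρ₁⟩ := pair j i h
      exact ⟨ρ₁, hρ₁.symm⟩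
  -- main induction on the finite index set
  suffices H : ∀ s : Finset ℕ, s.Nonempty → ∃ i₀ ∈ s, ∃ ρ₀ : ι, ∀ ρ, ρ₀ < ρ →
      ∀ i ∈ s, i ≠ i₀ → f i₀ ρ < f i ρ by
    exact H I hI
  intro s hs
  induction s using Finset.cons_induction with
  | empty => exact absurd hs (by simp)
  | cons a s ha ih =>
    by_cases hs' : s.Nonempty
    · obtain ⟨i₀, hi₀, ρ₀, h₀⟩ := ih hs'
      have hai : a ≠ i₀ := fun h => ha (h ▸ hi₀)
      obtain ⟨ρ₁, hp⟩ := pair' a i₀ hai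
      rcases hp with hp | hp
      · -- a eventually beats i₀, hence beats everything
        refine ⟨a, Finset.mem_cons_self a s, max ρ₀ ρ₁, fun ρ hρ i hi hia => ?_⟩
        have hρ₀ : ρ₀ < ρ := (le_max_left _ _).trans_lt hρ
        have hρ₁ : ρ₁ < ρ := (le_max_right _ _).trans_lt hρ
        have hia' : i ∈ s := by
          rcases Finset.mem_cons.mp hi with h | h
          · exact absurd h hia
          · exact h
        by_cases hii : i = i₀
        · exact hii ▸ hp ρ hρ₁
        · exact (hp ρ hρ₁).trans (h₀ ρ hρ₀ i hia' hii)
      · -- i₀ eventually beats a, so i₀ still minimal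
        refine ⟨i₀, Finset.mem_cons.mpr (Or.inr hi₀), max ρ₀ ρ₁,
          fun ρ hρ i hi hii => ?_⟩
        have hρ₀ : ρ₀ < ρ := (le_max_left _ _).trans_lt hρ
        have hρ₁ : ρ₁ < ρ := (le_max_right _ _).trans_lt hρ
        rcases Finset.mem_cons.mp hi with h | h
        · exact h ▸ hp ρ hρ₁
        · exact h₀ ρ hρ₀ i h hii
    · -- s is empty: the set is {a}
      refine ⟨a, Finset.mem_cons_self a s, Classical.arbitrary ι,
        fun ρ hρ i hi hia => ?_⟩
      rcases Finset.mem_cons.mp hi with h | h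
      · exact absurd h hia
      · exact absurd h (Finset.notMem_empty i ∘ (Finset.not_nonempty_iff_eq_empty.mp hs' ▸ id))
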